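/- arXiv:2211.06209 — 2 statements merged into one kernel-verified Lean document; each statement's English description precedes it below -/
import Mathlib

section
/- Let b be strictly concave with b' > 0 and c strictly convex, both differentiable. Let A^o be the globally optimal aggregate abatement, satisfying P·b'(A^o) = c'(A^o/P). In the 'mixed-motives' outcome, a_1 satisfies P·b'(A) = c'(a_1) and a_j satisfies P_j·b'(A) = c'(a_j) for j ≥ 2, with A = Σ_j P_j a_j. If P_j < P for some j ≥ 2 (strict inequality of populations), then A < A^o, and consequently the globally-oriented country's carbon price τ_1 = P·b'(A) exceeds the globally optimal uniform price τ^o = P·b'(A^o). -/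
/-- Mixed motives: if country `0` uses weight `P` (global) while each other
country `j` uses its own weight `Pⱼ < P`, then aggregate abatement falls short
of the global optimum `A⁰`, and the globally-oriented country's price
`τ₁ = P·b'(A)` exceeds the globally optimal price `τ⁰ = P·b'(A⁰)`. -/
theorem stmt_3 (n : ℕ) (P : Fin n → ℝ) (Db Dc : ℝ → ℝ)
    (hP : ∀ j, 0 < P j)
    (hDb : StrictAnti Db) (hDbpos : ∀ x, 0 < Db x) (hDc : StrictMono Dc)
    (Ptot : ℝ) (hPtot : Ptot = ∑ j, P j)
    (Ao : ℝ) (hAo : Ptot * Db Ao = Dc (Ao / Ptot))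
    (a : Fin n → ℝ) (A : ℝ) (hA : A = ∑ j, P j * a j)
    (i0 : Fin n) (h1 : Ptot * Db A = Dc (a i0))
    (hj : ∀ j : Fin n, j ≠ i0 → P j * Db A = Dc (a j))
    (hstrict : ∃ j : Fin n, j ≠ i0 ∧ P j < Ptot) :
    A < Ao ∧ Ptot * Db A > Ptot * Db Ao := by
  have hne : Nonempty (Fin n) := ⟨i0⟩
  have hPtotpos : 0 < Ptot := by
    rw [hPtot]
    exact Finset.sum_pos (fun j _ => hP j) ⟨i0, Finset.mem_univ i0⟩
  have hAlt : A < Ao := by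
    by_contra h
    push_neg at h  -- h : Ao ≤ A
    have hDbA : Db A ≤ Db Ao := hDb.antitone h
    have hkey : Dc (a i0) ≤ Dc (Ao / Ptot) := by
      rw [← h1, ← hAo]
      exact mul_le_mul_of_nonneg_left hDbA hPtotpos.le
    have hi0 : a i0 ≤ Ao / Ptot := hDc.le_iff_le.mp hkey
    have hle : ∀ j, a j ≤ Ao / Ptot := by
      intro j
      by_cases hji : j = i0
      · rw [hji]; exact hi0
      · have := hj j hji
        have hkey2 : Dc (a j) ≤ Dc (Ao / Ptot) := by
          rw [← this, ← hAo]
          calc P j * Db A ≤ Ptot * Db A := by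
                have : P j ≤ Ptot := by
                  rw [hPtot]
                  exact Finset.single_le_sum (fun k _ => (hP k).le) (Finset.mem_univ j)
                exact mul_le_mul_of_nonneg_right this (hDbpos A).le
            _ ≤ Ptot * Db Ao := mul_le_mul_of_nonneg_left hDbA hPtotpos.le
        exact hDc.le_iff_le.mp hkey2
    obtain ⟨j, hji, hjlt⟩ := hstrict
    have hjstrict : a j < Ao / Ptot := by
      have hkey3 : Dc (a j) < Dc (Ao / Ptot) := by
        rw [← hj j hji, ← hAo]
        calc P j * Db A < Ptot * Db A := by
              exact mul_lt_mul_of_pos_right hjlt (hDbpos A)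
          _ ≤ Ptot * Db Ao := mul_le_mul_of_nonneg_left hDbA hPtotpos.le
      exact hDc.lt_iff_lt.mp hkey3
    have hsum : A < ∑ k : Fin n, P k * (Ao / Ptot) := by
      rw [hA]
      refine Finset.sum_lt_sum (fun k _ => ?_) ⟨j, Finset.mem_univ j, ?_⟩
      · exact mul_le_mul_of_nonneg_left (hle k) (hP k).le
      · exact mul_lt_mul_of_pos_left hjstrict (hP j)
    have : ∑ k : Fin n, P k * (Ao / Ptot) = Ao := by
      rw [← Finset.sum_mul, ← hPtot]
      field_simp
    linarith
  refine ⟨hAlt, ?_⟩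
  exact mul_lt_mul_of_pos_left (hDb hAlt) hPtotpos
end

section
/- In the linear-quadratic coalition game with P_1 > P_2 > ... > P_N > 0, if 2P_2 < P_1 then the two-country coalition {1, j} fails internal stability for every j ≥ 2 (country j wants to leave), while any coalition of two countries both different from 1 fails external stability (country 1 wants to join). Hence the only stable outcome is the singleton coalition {1}. -/
/-- If `2P₂ < P₁` (indices 0-based: `2·P 1 < P 0`), then every two-country
coalition `{1, j}` fails internal stability (member `j` wants to leave), and any
two-country coalition not containing country 1 fails external stability
(country 1 wants to join); hence only the singleton `{1}` is stable. -/
theorem stmt_9 (n : ℕ) (hn : 2 ≤ n) (P : Fin n → ℝ)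
    (hanti : StrictAnti P) (hpos : ∀ i, 0 < P i)
    (h : 2 * P ⟨1, by omega⟩ < P ⟨0, by omega⟩) :
    (∀ j : Fin n, j ≠ ⟨0, by omega⟩ → 2 * P j < P ⟨0, by omega⟩)
    ∧ (∀ j k : Fin n, j ≠ ⟨0, by omega⟩ → k ≠ ⟨0, by omega⟩ → j ≠ k →
        2 * P ⟨0, by omega⟩ > P j + P k) := by
  have key : ∀ j : Fin n, j ≠ ⟨0, by omega⟩ → 2 * P j < P ⟨0, by omega⟩ := by
    intro j hj
    have h1 : (⟨1, by omega⟩ : Fin n) ≤ j := by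
      have : j.val ≠ 0 := fun hv => hj (Fin.ext hv)
      exact Fin.mk_le_of_le_val (by omega)
    have := hanti.antitone h1
    linarith
  refine ⟨key, fun j k hj hk _ => ?_⟩
  have h1 := key j hj
  have h2 := key k hk
  have := hpos ⟨0, by omega⟩
  linarith
end
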